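/- ⊢ ¬Rφ → R¬Rφ for every formula φ ∈ Φ. -/
import Mathlib


/-- Formulae of the language Φ: propositional variables, negation, implication,
the necessity modality `N` (`nec`), and the attacker's blameworthiness modality `A` (`blame`). -/
inductive Formula : Type
  | var : ℕ → Formula
  | neg : Formula → Formula
  | imp : Formula → Formula → Formula
  | nec : Formula → Formula
  | blame : Formula → Formula

namespace Formula

/-- Conjunction, defined through `→` and `¬` in the standard way. -/
def conj (φ ψ : Formula) : Formula := neg (imp φ (neg ψ))

/-- Disjunction, defined through `→` and `¬` in the standard way. -/
def disj (φ ψ : Formula) : Formula := imp (neg φ) ψ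

/-- Biconditional, defined through `→` and `¬` in the standard way. -/
def biimp (φ ψ : Formula) : Formula := conj (imp φ ψ) (imp ψ φ)

/-- `R φ` is an abbreviation for `¬(φ → A φ)`. -/
def R (φ : Formula) : Formula := neg (imp φ (blame φ))

end Formula

/-- A formula is a propositional tautology if it evaluates to true under every
truth assignment that respects `¬` and `→` (treating all other formulae as atoms). -/
def IsTaut (φ : Formula) : Prop :=
  ∀ v : Formula → Bool,
    (∀ ψ, v ψ.neg = !(v ψ)) →
    (∀ ψ χ, v (ψ.imp χ) = (!(v ψ) || v χ)) →
    v φ = true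

/-- Provability `⊢ φ` in the logical system for blameworthiness in security games. -/
inductive Prov : Formula → Prop
  | taut {φ} : IsTaut φ → Prov φ
  | truthN (φ : Formula) : Prov ((φ.nec).imp φ)
  | truthA (φ : Formula) : Prov ((φ.blame).imp φ)
  | negIntro (φ : Formula) : Prov (((φ.nec).neg).imp (((φ.nec).neg).nec))
  | distrib (φ ψ : Formula) : Prov (((φ.imp ψ).nec).imp ((φ.nec).imp (ψ.nec)))
  | unavoid (φ : Formula) : Prov ((φ.nec).imp ((φ.blame).neg))
  | strictCond (φ ψ : Formula) : Prov (((φ.imp ψ).nec).imp ((ψ.blame).imp (φ.imp (φ.blame))))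
  | conjAx (φ ψ : Formula) : Prov (((φ.conj ψ).blame).imp ((φ.blame).disj (ψ.blame)))
  | noBlame (φ : Formula) : Prov (((φ.imp (φ.blame)).blame).neg)
  | mp {φ ψ} : Prov (φ.imp ψ) → Prov φ → Prov ψ
  | necRule {φ} : Prov φ → Prov (φ.nec)

/-- `X ⊢ φ`: provability from the theorems of the logical system together with
additional hypotheses `X`, using only the Modus Ponens rule. -/
inductive ProvFrom (X : Set Formula) : Formula → Prop
  | hyp {φ} : φ ∈ X → ProvFrom X φ
  | thm {φ} : Prov φ → ProvFrom X φ
  | mp {φ ψ} : ProvFrom X (φ.imp ψ) → ProvFrom X φ → ProvFrom X ψ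

/-- A set of formulae is consistent if no contradiction is derivable from it. -/
def Consistent (X : Set Formula) : Prop := ¬ ∃ φ, ProvFrom X φ ∧ ProvFrom X φ.neg

/-- A maximal consistent set of formulae. -/
def MaxConsistent (X : Set Formula) : Prop :=
  Consistent X ∧ ∀ Y, X ⊆ Y → Consistent Y → Y = X

/-- A security game: a set `D` of actions of the defender; for each `d ∈ D` a
nonempty set `A d` of actions of the attacker in response to `d`; and a valuation
assigning to each propositional variable a set of action profiles `(d, a)`. -/
structure SecurityGame where
  D : Type
  A : D → Type
  nonempty : ∀ d, Nonempty (A d)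
  val : ℕ → ∀ d : D, A d → Prop

/-- The satisfaction relation `(d, a) ⊨ φ` of a security game. -/
def Sat (G : SecurityGame) : Formula → ∀ d : G.D, G.A d → Prop
  | .var p, d, a => G.val p d a
  | .neg φ, d, a => ¬ Sat G φ d a
  | .imp φ ψ, d, a => Sat G φ d a → Sat G ψ d a
  | .nec φ, _, _ => ∀ (d' : G.D) (a' : G.A d'), Sat G φ d' a'
  | .blame φ, d, a => Sat G φ d a ∧ ∃ a' : G.A d, ¬ Sat G φ d a'

/-- The set Ω of the canonical game `G(X)`: all maximal consistent sets of formulae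
containing `{φ | N φ ∈ X}`. -/
def canonicalOmega (X : Set Formula) : Set (Set Formula) :=
  {ω | MaxConsistent ω ∧ ∀ φ, φ.nec ∈ X → φ ∈ ω}

/-- The indistinguishability relation `ω ∼ ω'` of the canonical game. -/
def simRel (ω ω' : Set Formula) : Prop := ∀ φ : Formula, φ.R ∈ ω ↔ φ.R ∈ ω'

/-- The `∼`-equivalence class `[δ]` of `δ` inside Ω. -/
def eqClass (X : Set Formula) (δ : Set Formula) : Set (Set Formula) :=
  {ω ∈ canonicalOmega X | simRel δ ω}

/-- The canonical security game `G(X)`. -/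
def canonicalGame (X : Set Formula) : SecurityGame where
  D := canonicalOmega X
  A := fun δ => {ω : canonicalOmega X // simRel δ.val ω.val}
  nonempty := fun δ => ⟨⟨δ, fun _ => Iff.rfl⟩⟩
  val := fun p _ a => Formula.var p ∈ a.val.val

namespace Formula

private lemma prov_dneg_intro (a : Formula) : Prov (a.imp a.neg.neg) := by
  apply Prov.taut
  intro v hn hi
  simp only [hn, hi]
  cases v a <;> rfl

private lemma prov_imp_trans {a b c : Formula} (h1 : Prov (a.imp b))
    (h2 : Prov (b.imp c)) : Prov (a.imp c) := by
  have t : Prov ((a.imp b).imp ((b.imp c).imp (a.imp c))) := by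
    apply Prov.taut
    intro v hn hi
    simp only [hn, hi]
    cases v a <;> cases v b <;> cases v c <;> rfl
  exact Prov.mp (Prov.mp t h1) h2

private lemma prov_imp_app {a b c : Formula} (h1 : Prov (a.imp (b.imp c)))
    (h2 : Prov (a.imp b)) : Prov (a.imp c) := by
  have t : Prov ((a.imp (b.imp c)).imp ((a.imp b).imp (a.imp c))) := by
    apply Prov.taut
    intro v hn hi
    simp only [hn, hi]
    cases v a <;> cases v b <;> cases v c <;> rfl
  exact Prov.mp (Prov.mp t h1) h2

private lemma prov_neg_of_imp {a c : Formula} (h1 : Prov c.neg)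
    (h2 : Prov (a.imp c)) : Prov a.neg := by
  have t : Prov (c.neg.imp ((a.imp c).imp a.neg)) := by
    apply Prov.taut
    intro v hn hi
    simp only [hn, hi]
    cases v a <;> cases v c <;> rfl
  exact Prov.mp (Prov.mp t h1) h2

private lemma prov_dneg_elim (a : Formula) : Prov (a.neg.neg.imp a) := by
  apply Prov.taut
  intro v hn hi
  simp only [hn, hi]
  cases v a <;> rfl

private lemma prov_R_intro (a : Formula) :
    Prov ((a.blame.neg).imp (a.imp ((a.imp a.blame).neg))) := by
  apply Prov.taut
  intro v hn hi
  simp only [hn, hi]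
  cases v a <;> cases v a.blame <;> rfl

end Formula

/-- `⊢ ¬R φ → R ¬R φ` for every formula `φ`. -/
theorem R_negIntrospection (φ : Formula) :
    Prov (((φ.R).neg).imp (((φ.R).neg).R)) := by
  have hχ : (φ.R).neg = (φ.imp φ.blame).neg.neg := rfl
  set χ : Formula := φ.imp φ.blame with hχdef
  -- ψ := ¬Rφ = ¬¬χ
  set ψ : Formula := (φ.R).neg with hψdef
  -- ⊢ χ → ψ  (double negation introduction)
  have h1 : Prov (χ.imp ψ) := hχ ▸ Formula.prov_dneg_intro χ
  -- Aψ → (χ → Aχ) by Strict Conditional + Necessitation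
  have h3 : Prov ((ψ.blame).imp (χ.imp χ.blame)) :=
    Prov.mp (Prov.strictCond χ ψ) (Prov.necRule h1)
  -- ψ → χ  (double negation elimination)
  have hψχ : Prov (ψ.imp χ) := hχ ▸ Formula.prov_dneg_elim χ
  -- Aψ → χ
  have h4 : Prov ((ψ.blame).imp χ) :=
    Formula.prov_imp_trans (Prov.truthA ψ) hψχ
  -- Aψ → Aχ
  have h5 : Prov ((ψ.blame).imp (χ.blame)) := Formula.prov_imp_app h3 h4
  -- ¬Aχ is the No Blame axiom
  have h6 : Prov ((χ.blame).neg) := Prov.noBlame φ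
  -- ¬Aψ
  have h7 : Prov ((ψ.blame).neg) := Formula.prov_neg_of_imp h6 h5
  -- ¬Aψ → (ψ → ¬(ψ → Aψ)), i.e. ¬Aψ → (ψ → Rψ)
  exact Prov.mp (Formula.prov_R_intro ψ) h7
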